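/- Let Q(z) = q_0 + q_1 z + … + q_{n_q} z^{n_q} with q_{n_q} ≠ 0 have zeros z_1,…,z_{n_q} (with multiplicity). Given δ > 0, there exist at most n_q closed disks whose radii sum to at most 2eδ, such that for every z outside their union, ∏_{j=1}^{n_q} |z − z_j| > δ^{n_q}. -/

import Mathlib

open Polynomial Metric

lemma list_length_le_sum (l : List ℕ) (h : ∀ x ∈ l, 1 ≤ x) : l.length ≤ l.sum := by
  induction l with
  | nil => simp
  | cons a t ih =>
    simp only [List.length_cons, List.sum_cons]
    have ha := h a List.mem_cons_self
    have := ih (fun x hx => h x (List.mem_cons_of_mem a hx))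
    omega

open Classical in
/-- Cartan's disk-selection construction: for any finite set `s` of indices of
points, there is a list of (center, weight) pairs whose weights sum to `s.card`,
each weight at least 1, such that any `w` outside the doubled disks is "sparse":
for every `k ≥ 1`, fewer than `k` of the points of `s` are within `k*H/n` of `w`. -/
lemma cartan_aux {n : ℕ} (z : Fin n → ℂ) (H : ℝ) (hH : 0 < H)
    (s : Finset (Fin n)) :
    ∃ l : List (ℂ × ℕ),
      (l.map Prod.snd).sum = s.card ∧ (∀ d ∈ l, 1 ≤ d.2) ∧
      ∀ w : ℂ, (∀ d ∈ l, 2 * d.2 * H / n < dist w d.1) →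
        ∀ k : ℕ, 1 ≤ k →
          ((s.filter fun j => dist w (z j) ≤ k * H / n).card < k) := by
  induction s using Finset.strongInduction with
  | _ s ih =>
  rcases s.eq_empty_or_nonempty with rfl | hs
  · exact ⟨[], by simp, by simp, fun w _ k hk => by simpa using Nat.lt_of_lt_of_le Nat.zero_lt_one hk⟩
  have hn : (0:ℝ) < n := by
    obtain ⟨j₀, _⟩ := hs
    exact_mod_cast j₀.pos
  set P : ℕ → Prop :=
    fun p => ∃ c : ℂ, p ≤ (s.filter fun j => dist c (z j) ≤ p * H / n).card with hPdef
  have hP1 : P 1 := by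
    obtain ⟨j₀, hj₀⟩ := hs
    refine ⟨z j₀, ?_⟩
    have hmem : j₀ ∈ s.filter fun j => dist (z j₀) (z j) ≤ (1:ℕ) * H / n := by
      simp only [Finset.mem_filter]
      exact ⟨hj₀, by simp [dist_self]; positivity⟩
    exact Finset.card_pos.2 ⟨j₀, hmem⟩
  set p₁ : ℕ := Nat.findGreatest P s.card with hp₁def
  have hcard1 : 1 ≤ s.card := Finset.card_pos.2 hs
  have hp₁pos : 1 ≤ p₁ := Nat.le_findGreatest hcard1 hP1
  have hPp₁ : P p₁ := Nat.findGreatest_spec hcard1 hP1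
  obtain ⟨c₁, hc₁⟩ := hPp₁
  set T : Finset (Fin n) := s.filter fun j => dist c₁ (z j) ≤ p₁ * H / n with hTdef
  have hTs : T ⊆ s := Finset.filter_subset _ _
  have hTcard : T.card = p₁ := by
    refine le_antisymm ?_ hc₁
    by_contra hcon
    push_neg at hcon
    have hTsub : T ⊆ s.filter fun j => dist c₁ (z j) ≤ ((p₁ + 1 : ℕ):ℝ) * H / n := by
      intro j hj
      rw [hTdef, Finset.mem_filter] at hj
      rw [Finset.mem_filter]
      refine ⟨hj.1, le_trans hj.2 ?_⟩
      have : (p₁:ℝ) ≤ ((p₁+1:ℕ):ℝ) := by push_cast; linarith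
      gcongr
    have hcard2 : p₁ + 1 ≤ (s.filter fun j => dist c₁ (z j) ≤ ((p₁ + 1 : ℕ):ℝ) * H / n).card :=
      le_trans hcon (Finset.card_le_card hTsub)
    have hle : p₁ + 1 ≤ s.card := le_trans hcon (Finset.card_le_card hTs)
    exact Nat.findGreatest_is_greatest (P := P) (n := s.card) (by omega) hle ⟨c₁, hcard2⟩
  have hp₁le : p₁ ≤ s.card := Nat.findGreatest_le _
  have hTne : T.Nonempty := Finset.card_pos.1 (by rw [hTcard]; omega)
  have hss : s \ T ⊂ s := Finset.sdiff_ssubset hTs hTne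
  obtain ⟨l', hsum', hone', hmain'⟩ := ih (s \ T) hss
  refine ⟨(c₁, p₁) :: l', ?_, ?_, ?_⟩
  · simp only [List.map_cons, List.sum_cons, hsum']
    rw [Finset.card_sdiff, Finset.inter_eq_left.mpr hTs, hTcard]
    omega
  · intro d hd
    rcases List.mem_cons.1 hd with rfl | hd
    · exact hp₁pos
    · exact hone' d hd
  · intro w hw k hk
    by_contra hcon
    push_neg at hcon
    have hwc₁ : 2 * (p₁:ℝ) * H / n < dist w c₁ := hw (c₁, p₁) List.mem_cons_self
    rcases le_or_gt k p₁ with hkp | hpk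
    · -- k ≤ p₁
      by_cases hFs' : ∀ j ∈ s.filter fun j => dist w (z j) ≤ (k:ℝ) * H / n, j ∈ s \ T
      · have hsub : (s.filter fun j => dist w (z j) ≤ (k:ℝ) * H / n) ⊆
            ((s \ T).filter fun j => dist w (z j) ≤ (k:ℝ) * H / n) := by
          intro j hj
          exact Finset.mem_filter.2 ⟨hFs' j hj, (Finset.mem_filter.1 hj).2⟩
        have hlt := hmain' w (fun d hd => hw d (List.mem_cons_of_mem _ hd)) k hk
        have := Finset.card_le_card hsub
        omega
      · push_neg at hFs'
        obtain ⟨j, hjF, hjns'⟩ := hFs'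
        rw [Finset.mem_filter] at hjF
        have hjT : j ∈ T := by
          by_contra hjnT
          exact hjns' (Finset.mem_sdiff.2 ⟨hjF.1, hjnT⟩)
        rw [hTdef, Finset.mem_filter] at hjT
        have h1 : dist w (z j) ≤ (p₁:ℝ) * H / n := by
          refine le_trans hjF.2 ?_
          have : (k:ℝ) ≤ (p₁:ℝ) := by exact_mod_cast hkp
          gcongr
        have h2 : dist w c₁ ≤ 2 * (p₁:ℝ) * H / n := by
          calc dist w c₁ ≤ dist w (z j) + dist (z j) c₁ := dist_triangle _ _ _
          _ ≤ (p₁:ℝ) * H / n + (p₁:ℝ) * H / n := by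
              rw [dist_comm (z j) c₁]; exact add_le_add h1 hjT.2
          _ = 2 * (p₁:ℝ) * H / n := by ring
        linarith
    · -- p₁ < k
      rcases le_or_gt k s.card with hks | hsk
      · exact Nat.findGreatest_is_greatest hpk hks ⟨w, hcon⟩
      · have := Finset.card_le_card
          (Finset.filter_subset (fun j => dist w (z j) ≤ (k:ℝ) * H / n) s)
        omega

/-- `n^n ≤ n! * e^n`. -/
lemma pow_self_le_factorial_mul_exp (n : ℕ) :
    ((n:ℝ))^n ≤ (n.factorial : ℝ) * Real.exp 1 ^ n := by
  have hx : (0:ℝ) ≤ (n:ℝ) := Nat.cast_nonneg _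
  have hsum := Real.sum_le_exp_of_nonneg hx (n+1)
  have hterm : ((n:ℝ))^n / (n.factorial : ℝ) ≤ Real.exp n := by
    refine le_trans ?_ hsum
    exact Finset.single_le_sum (f := fun i => (n:ℝ)^i / (i.factorial : ℝ))
      (fun i _ => by positivity) (Finset.self_mem_range_succ n)
  have hfac : (0:ℝ) < (n.factorial : ℝ) := by exact_mod_cast n.factorial_pos
  have hexp : Real.exp (n:ℝ) = Real.exp 1 ^ n := by
    rw [← Real.exp_nat_mul, mul_one]
  rw [div_le_iff₀ hfac, hexp] at hterm
  linarith [hterm]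

theorem boutroux_cartan (nq : ℕ) (hnq : 1 ≤ nq) (z : Fin nq → ℂ)
    (Q : Polynomial ℂ) (q : ℂ) (hq : q ≠ 0)
    (hQ : Q = Polynomial.C q * ∏ j : Fin nq, (Polynomial.X - Polynomial.C (z j)))
    (δ : ℝ) (hδ : 0 < δ) :
    ∃ (m : ℕ) (_ : m ≤ nq) (center : Fin m → ℂ) (r : Fin m → ℝ),
      (∀ i, 0 ≤ r i) ∧
      (∑ i, r i) ≤ 2 * Real.exp 1 * δ ∧
      ∀ w : ℂ, w ∉ ⋃ i, Metric.closedBall (center i) (r i) →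
        δ ^ nq < ∏ j : Fin nq, ‖w - z j‖ := by
  set e : ℝ := Real.exp 1 with hedef
  have he : (0:ℝ) < e := Real.exp_pos 1
  set H : ℝ := e * δ with hHdef
  have hH : (0:ℝ) < H := by positivity
  have hn : (0:ℝ) < (nq:ℝ) := by exact_mod_cast hnq
  obtain ⟨l, hsum, hone, hmain⟩ := cartan_aux z H hH (Finset.univ : Finset (Fin nq))
  rw [Finset.card_univ, Fintype.card_fin] at hsum
  refine ⟨l.length, ?_, fun i => (l.get i).1, fun i => 2 * ((l.get i).2 : ℝ) * H / nq,
    ?_, ?_, ?_⟩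
  · -- l.length ≤ nq
    have h1 : (l.map Prod.snd).length ≤ (l.map Prod.snd).sum :=
      list_length_le_sum _ (by
        intro x hx
        obtain ⟨d, hd, rfl⟩ := List.mem_map.1 hx
        exact hone d hd)
    simpa [hsum] using h1
  · intro i; positivity
  · -- sum of radii
    have hofn : (l.map Prod.snd).sum = ∑ i : Fin l.length, (l.get i).2 := by
      conv_lhs => rw [← List.ofFn_get l]
      rw [List.map_ofFn, List.sum_ofFn]
      rfl
    have hcast : (∑ i : Fin l.length, ((l.get i).2 : ℝ)) = (nq : ℝ) := by
      rw [← Nat.cast_sum, ← hofn, hsum]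
    have : (∑ i : Fin l.length, 2 * ((l.get i).2 : ℝ) * H / nq)
        = (∑ i : Fin l.length, ((l.get i).2 : ℝ)) * (2 * H / nq) := by
      rw [Finset.sum_mul]
      congr 1
      funext i
      ring
    rw [this, hcast]
    rw [mul_div_assoc', mul_comm]
    rw [mul_div_assoc]
    rw [div_self hn.ne']
    rw [mul_one, hHdef]
    ring_nf
    exact le_refl _
  · intro w hw
    -- sparsity
    have hout : ∀ d ∈ l, 2 * (d.2:ℝ) * H / nq < dist w d.1 := by
      intro d hd
      obtain ⟨i, rfl⟩ := List.mem_iff_get.1 hd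
      have := hw
      simp only [Set.mem_iUnion, not_exists] at this
      have h := this i
      rw [Metric.mem_closedBall] at h
      exact lt_of_not_ge h
    have hsparse := hmain w hout
    set D : Fin nq → ℝ := fun j => dist w (z j) with hDdef
    set σ : Equiv.Perm (Fin nq) := Tuple.sort D with hσdef
    have hkey : ∀ k : Fin nq, ((k:ℕ):ℝ) * H / nq + H / nq < D (σ k) := by
      intro k
      by_contra hcon
      push_neg at hcon
      have hcon' : D (σ k) ≤ (((k:ℕ)+1 : ℕ):ℝ) * H / nq := by
        push_cast
        calc D (σ k) ≤ ((k:ℕ):ℝ) * H / nq + H / nq := hcon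
        _ = ((k:ℕ) + 1 : ℝ) * H / nq := by ring
      have hA : (Finset.Iic k).image σ ⊆
          Finset.univ.filter fun j => dist w (z j) ≤ (((k:ℕ)+1 : ℕ):ℝ) * H / nq := by
        intro j hj
        obtain ⟨i, hi, rfl⟩ := Finset.mem_image.1 hj
        rw [Finset.mem_Iic] at hi
        refine Finset.mem_filter.2 ⟨Finset.mem_univ _, ?_⟩
        have hmono : D (σ i) ≤ D (σ k) := Tuple.monotone_sort D hi
        exact le_trans hmono hcon'
      have hcardA : ((Finset.Iic k).image σ).card = (k:ℕ) + 1 := by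
        rw [Finset.card_image_of_injective _ σ.injective, Fin.card_Iic]
      have hlt := hsparse ((k:ℕ)+1) (by omega)
      have := Finset.card_le_card hA
      omega
    have hprod : ∏ j : Fin nq, D j = ∏ k : Fin nq, D (σ k) :=
      (Equiv.prod_comp σ D).symm
    have hlow : ∏ k : Fin nq, (((k:ℕ):ℝ) * H / nq + H / nq) < ∏ k : Fin nq, D (σ k) := by
      haveI : Nonempty (Fin nq) := ⟨⟨0, hnq⟩⟩
      refine Finset.prod_lt_prod_of_nonempty ?_ ?_ Finset.univ_nonempty
      · intro i _; positivity
      · intro i _; exact hkey i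
    have hfact : ∏ k : Fin nq, (((k:ℕ):ℝ) * H / nq + H / nq)
        = (nq.factorial : ℝ) * (H / nq) ^ nq := by
      have : ∀ k : Fin nq, ((k:ℕ):ℝ) * H / nq + H / nq = (((k:ℕ):ℝ) + 1) * (H / nq) := by
        intro k; ring
      rw [Finset.prod_congr rfl (fun k _ => this k), Finset.prod_mul_distrib,
        Finset.prod_const, Finset.card_univ, Fintype.card_fin]
      congr 1
      rw [Fin.prod_univ_eq_prod_range (fun i => ((i:ℝ) + 1)) nq]
      rw [← Finset.prod_range_add_one_eq_factorial nq]
      push_cast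
      rfl
    have hdelta : δ ^ nq ≤ (nq.factorial : ℝ) * (H / nq) ^ nq := by
      have h1 : (H / nq) ^ nq = e ^ nq * δ ^ nq / ((nq:ℝ)) ^ nq := by
        rw [div_pow, hHdef, mul_pow]
      rw [h1, mul_div_assoc', le_div_iff₀ (by positivity)]
      have hkey2 := pow_self_le_factorial_mul_exp nq
      calc δ ^ nq * ((nq:ℝ)) ^ nq ≤ δ ^ nq * ((nq.factorial : ℝ) * e ^ nq) := by
            exact mul_le_mul_of_nonneg_left hkey2 (by positivity)
      _ = (nq.factorial : ℝ) * (e ^ nq * δ ^ nq) := by ring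
    have hnorm : ∀ j : Fin nq, ‖w - z j‖ = D j := by
      intro j; exact (dist_eq_norm w (z j)).symm
    calc δ ^ nq ≤ (nq.factorial : ℝ) * (H / nq) ^ nq := hdelta
    _ = ∏ k : Fin nq, (((k:ℕ):ℝ) * H / nq + H / nq) := hfact.symm
    _ < ∏ k : Fin nq, D (σ k) := hlow
    _ = ∏ j : Fin nq, D j := hprod.symm
    _ = ∏ j : Fin nq, ‖w - z j‖ := Finset.prod_congr rfl (fun j _ => (hnorm j).symm)
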